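/- Let φ: V → W be a linear map between finite-dimensional real vector spaces. For a Dirac structure L_V on V, the forward image 𝔉φ(L_V) = {(φ(x), η) : x ∈ V, η ∈ W*, (x, φ*η) ∈ L_V} is a Dirac structure on W. For a Dirac structure L_W on W, the backward image 𝔅φ(L_W) = {(x, φ*η) : x ∈ V, η ∈ W*, (φ(x), η) ∈ L_W} is a Dirac structure on V. -/

import Mathlib

open Module LinearMap

variable {V W U : Type*} [AddCommGroup V] [Module ℝ V] [FiniteDimensional ℝ V]
  [AddCommGroup W] [Module ℝ W] [FiniteDimensional ℝ W]
  [AddCommGroup U] [Module ℝ U] [FiniteDimensional ℝ U]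

/-- The canonical symmetric pairing on `V ⊕ V*`. -/
noncomputable def diracPairing (p q : V × Module.Dual ℝ V) : ℝ := (p.2 q.1 + q.2 p.1) / 2

/-- A subspace of `V ⊕ V*` is isotropic if the pairing vanishes on it. -/
def IsIsotropic (L : Submodule ℝ (V × Module.Dual ℝ V)) : Prop :=
  ∀ p ∈ L, ∀ q ∈ L, diracPairing p q = 0

/-- A Dirac structure: a maximally isotropic subspace. -/
def IsDirac (L : Submodule ℝ (V × Module.Dual ℝ V)) : Prop :=
  IsIsotropic L ∧ ∀ L' : Submodule ℝ (V × Module.Dual ℝ V), IsIsotropic L' → L ≤ L' → L' = L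

/-- The graph of a bivector `π : V* → V`. -/
def graphBiv (π : Module.Dual ℝ V →ₗ[ℝ] V) : Submodule ℝ (V × Module.Dual ℝ V) where
  carrier := {p | p.1 = π p.2}
  add_mem' := by
    intro a b ha hb
    simp only [Set.mem_setOf_eq, Prod.fst_add, Prod.snd_add, map_add] at *
    rw [ha, hb]
  zero_mem' := by simp
  smul_mem' := by
    intro c a ha
    simp only [Set.mem_setOf_eq, Prod.smul_fst, Prod.smul_snd, map_smul] at *
    rw [ha]

/-- Forward image of a Dirac structure along a linear map. -/
def Fwd (φ : V →ₗ[ℝ] W) (L : Submodule ℝ (V × Module.Dual ℝ V)) :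
    Submodule ℝ (W × Module.Dual ℝ W) where
  carrier := {q | ∃ x : V, q.1 = φ x ∧ (x, φ.dualMap q.2) ∈ L}
  add_mem' := by
    rintro a b ⟨x, hx, hxL⟩ ⟨y, hy, hyL⟩
    refine ⟨x + y, ?_, ?_⟩
    · simp [Prod.fst_add, hx, hy]
    · simpa [Prod.snd_add, Prod.mk_add_mk] using L.add_mem hxL hyL
  zero_mem' := ⟨0, by simp, by convert L.zero_mem using 1; ext <;> simp⟩
  smul_mem' := by
    rintro c a ⟨x, hx, hxL⟩
    refine ⟨c • x, ?_, ?_⟩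
    · simp [Prod.smul_fst, hx]
    · simpa [Prod.smul_snd, Prod.smul_mk] using L.smul_mem c hxL

/-- Backward image of a Dirac structure along a linear map. -/
def Bwd (φ : V →ₗ[ℝ] W) (L : Submodule ℝ (W × Module.Dual ℝ W)) :
    Submodule ℝ (V × Module.Dual ℝ V) where
  carrier := {p | ∃ η : Module.Dual ℝ W, p.2 = φ.dualMap η ∧ (φ p.1, η) ∈ L}
  add_mem' := by
    rintro a b ⟨x, hx, hxL⟩ ⟨y, hy, hyL⟩
    refine ⟨x + y, ?_, ?_⟩
    · simp [Prod.snd_add, hx, hy]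
    · simpa [Prod.fst_add, Prod.mk_add_mk] using L.add_mem hxL hyL
  zero_mem' := ⟨0, by simp, by convert L.zero_mem using 1; ext <;> simp⟩
  smul_mem' := by
    rintro c a ⟨x, hx, hxL⟩
    refine ⟨c • x, ?_, ?_⟩
    · simp [Prod.smul_snd, hx]
    · simpa [Prod.smul_fst, Prod.smul_mk] using L.smul_mem c hxL

/-- Gauge transformation of a Dirac structure by a 2-form `B : V → V*`. -/
def tau (B : V →ₗ[ℝ] Module.Dual ℝ V) (L : Submodule ℝ (V × Module.Dual ℝ V)) :
    Submodule ℝ (V × Module.Dual ℝ V) where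
  carrier := {p | (p.1, p.2 - B p.1) ∈ L}
  add_mem' := by
    intro a b ha hb
    have := L.add_mem ha hb
    simpa [Prod.mk_add_mk, Prod.fst_add, Prod.snd_add, map_add, add_sub_add_comm] using this
  zero_mem' := by
    change ((0 : V × Module.Dual ℝ V).1, (0 : V × Module.Dual ℝ V).2 - B (0 : V × Module.Dual ℝ V).1) ∈ L
    convert L.zero_mem using 1; ext <;> simp
  smul_mem' := by
    intro c a ha
    have := L.smul_mem c ha
    simpa [Prod.smul_mk, Prod.smul_fst, Prod.smul_snd, smul_sub] using this

/-- Orthogonal of a subspace with respect to a bilinear form `Ω : V → V*`. -/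
def orth (Ω : V →ₗ[ℝ] Module.Dual ℝ V) (S : Submodule ℝ V) : Submodule ℝ V where
  carrier := {x | ∀ y ∈ S, Ω x y = 0}
  add_mem' := by
    intro a b ha hb y hy
    simp [map_add, ha y hy, hb y hy]
  zero_mem' := by simp
  smul_mem' := by
    intro c a ha y hy
    simp [ha y hy]

/-- Pullback of a 2-form along a linear map. -/
def pb (φ : V →ₗ[ℝ] W) (B : W →ₗ[ℝ] Module.Dual ℝ W) : V →ₗ[ℝ] Module.Dual ℝ V :=
  φ.dualMap ∘ₗ B ∘ₗ φ

/-- The Dirac structure associated to a pair `(R, Ω)` of a subspace and a skew form on it. -/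
def diracOfForm (R : Submodule ℝ V) (Ω : R →ₗ[ℝ] Module.Dual ℝ R) :
    Submodule ℝ (V × Module.Dual ℝ V) where
  carrier := {p | ∃ hx : p.1 ∈ R, ∀ y : R, p.2 y = Ω ⟨p.1, hx⟩ y}
  add_mem' := by
    rintro a b ⟨ha, Ha⟩ ⟨hb, Hb⟩
    refine ⟨R.add_mem ha hb, fun y => ?_⟩
    have h : (⟨(a + b).1, R.add_mem ha hb⟩ : R) = ⟨a.1, ha⟩ + ⟨b.1, hb⟩ := rfl
    rw [h, map_add]
    simp [Prod.snd_add, Ha y, Hb y]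
  zero_mem' := by
    refine ⟨R.zero_mem, fun y => ?_⟩
    have h : (⟨((0 : V × Module.Dual ℝ V)).1, R.zero_mem⟩ : R) = 0 := rfl
    rw [h, map_zero]
    rfl
  smul_mem' := by
    rintro c a ⟨ha, Ha⟩
    refine ⟨R.smul_mem c ha, fun y => ?_⟩
    have h : (⟨(c • a).1, R.smul_mem c ha⟩ : R) = c • ⟨a.1, ha⟩ := rfl
    rw [h, map_smul]
    simp [Prod.smul_snd, Ha y]

set_option linter.unusedSectionVars false

-- AUX START
namespace DiracAux

noncomputable def Bform : (V × Module.Dual ℝ V) →ₗ[ℝ] (V × Module.Dual ℝ V) →ₗ[ℝ] ℝ :=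
  LinearMap.mk₂ ℝ (fun p q => (p.2 q.1 + q.2 p.1) / 2)
    (by intro p p' q; simp; ring)
    (by intro c p q; simp; ring)
    (by intro p q q'; simp; ring)
    (by intro c p q; simp; ring)

lemma Bform_apply (p q : V × Module.Dual ℝ V) : Bform p q = diracPairing p q := rfl

lemma dp_symm (p q : V × Module.Dual ℝ V) : diracPairing p q = diracPairing q p := by
  unfold diracPairing; ring

noncomputable def perp (L : Submodule ℝ (V × Module.Dual ℝ V)) :
    Submodule ℝ (V × Module.Dual ℝ V) :=
  LinearMap.ker ((Bform.comp L.subtype).flip)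

lemma mem_perp {L : Submodule ℝ (V × Module.Dual ℝ V)} {q : V × Module.Dual ℝ V} :
    q ∈ perp L ↔ ∀ p ∈ L, diracPairing p q = 0 := by
  constructor
  · intro h p hp
    have := LinearMap.congr_fun (LinearMap.mem_ker.mp h) ⟨p, hp⟩
    simpa [Bform_apply] using this
  · intro h
    simp only [perp, LinearMap.mem_ker]
    ext p
    simpa [Bform_apply] using h p.1 p.2

lemma le_perp_of_isotropic {L : Submodule ℝ (V × Module.Dual ℝ V)} (h : IsIsotropic L) :
    L ≤ perp L := fun q hq => mem_perp.mpr fun p hp => h p hp q hq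

lemma isDirac_of_lagrangian {L : Submodule ℝ (V × Module.Dual ℝ V)}
    (hiso : IsIsotropic L) (hperp : perp L ≤ L) : IsDirac L := by
  refine ⟨hiso, fun L' hL' hle => le_antisymm (fun q hq => hperp ?_) hle⟩
  exact mem_perp.mpr fun p hp => hL' p (hle hp) q hq


set_option maxHeartbeats 1000000 in
set_option synthInstance.maxHeartbeats 200000 in
lemma finrank_le_perp_add {L : Submodule ℝ (V × Module.Dual ℝ V)} :
    finrank ℝ (V × Module.Dual ℝ V) ≤ finrank ℝ (perp L) + finrank ℝ L := by
  haveI hfree : Module.Free ℝ ↥L := Module.Free.of_divisionRing ℝ ↥L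
  haveI : FiniteDimensional ℝ (Module.Dual ℝ ↥L) :=
    Module.Finite.of_basis (Module.finBasis ℝ ↥L).dualBasis
  have h1 := LinearMap.finrank_range_add_finrank_ker ((Bform.comp L.subtype).flip)
  have h2 : finrank ℝ (LinearMap.range ((Bform.comp L.subtype).flip))
      ≤ finrank ℝ (Module.Dual ℝ L) := Submodule.finrank_le _
  have h3 : finrank ℝ (Module.Dual ℝ L) = finrank ℝ L := Subspace.dual_finrank_eq (K := ℝ) (V := ↥L)
  have : finrank ℝ (perp L) = finrank ℝ (LinearMap.ker ((Bform.comp L.subtype).flip)) := rfl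
  omega

lemma finrank_le_of_nonneg (M : Submodule ℝ (V × Module.Dual ℝ V))
    (h : ∀ v ∈ M, 0 ≤ diracPairing v v) : finrank ℝ M ≤ finrank ℝ V := by
  classical
  set b := Module.finBasis ℝ V with hb
  set F := b.toDual with hF
  have hFxx : ∀ x : V, F x x = ∑ i, b.repr x i * b.repr x i := by
    intro x
    have hx : F x x = F x (∑ i, b.repr x i • b i) := by rw [b.sum_repr]
    rw [hx, map_sum]
    simp [hF, Basis.toDual_apply_left, mul_comm]
  have hFnn : ∀ x : V, 0 ≤ F x x := by
    intro x; rw [hFxx]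
    exact Finset.sum_nonneg fun i _ => mul_self_nonneg _
  have hFzero : ∀ x : V, F x x = 0 → x = 0 := by
    intro x hx
    rw [hFxx] at hx
    have hall : ∀ i ∈ Finset.univ, b.repr x i * b.repr x i = 0 :=
      (Finset.sum_eq_zero_iff_of_nonneg fun i _ => mul_self_nonneg _).mp hx
    have : b.repr x = 0 := by
      ext i
      exact mul_self_eq_zero.mp (hall i (Finset.mem_univ i))
    simpa using b.repr.map_eq_zero_iff.mp this
  set G : V →ₗ[ℝ] V × Module.Dual ℝ V := LinearMap.prod LinearMap.id (-F) with hG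
  have hinj : Function.Injective G := fun x y hxy => congrArg Prod.fst hxy
  have hdim : finrank ℝ (LinearMap.range G) = finrank ℝ V :=
    LinearMap.finrank_range_of_inj hinj
  have hdisj : M ⊓ LinearMap.range G = ⊥ := by
    rw [eq_bot_iff]
    rintro v ⟨hvM, x, rfl⟩
    have h1 : diracPairing (G x) (G x) = -(F x x) := by
      simp [diracPairing, hG]
    have h2 := h _ hvM
    have hx0 : F x x = 0 := le_antisymm (by rw [h1] at h2; linarith) (hFnn x)
    have hx : x = 0 := hFzero x hx0
    simp [hG, hx]
  have hsum := Submodule.finrank_sup_add_finrank_inf_eq M (LinearMap.range G)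
  rw [hdisj] at hsum
  have hle : finrank ℝ ↥(M ⊔ LinearMap.range G) ≤ finrank ℝ (V × Module.Dual ℝ V) :=
    Submodule.finrank_le _
  have hprod : finrank ℝ (V × Module.Dual ℝ V) = finrank ℝ V + finrank ℝ V := by
    rw [Module.finrank_prod, Subspace.dual_finrank_eq]
  simp [finrank_bot] at hsum
  omega

lemma finrank_le_of_nonpos (M : Submodule ℝ (V × Module.Dual ℝ V))
    (h : ∀ v ∈ M, diracPairing v v ≤ 0) : finrank ℝ M ≤ finrank ℝ V := by
  set σ : (V × Module.Dual ℝ V) ≃ₗ[ℝ] (V × Module.Dual ℝ V) :=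
    (LinearEquiv.refl ℝ V).prodCongr (LinearEquiv.neg ℝ) with hσ
  have := finrank_le_of_nonneg (M.map (σ : (V × Module.Dual ℝ V) →ₗ[ℝ] (V × Module.Dual ℝ V)))
    (by
      rintro v ⟨w, hw, rfl⟩
      have hσw : (σ : (V × Module.Dual ℝ V) →ₗ[ℝ] _) w = (w.1, -w.2) := rfl
      rw [hσw]
      have : diracPairing ((w.1, -w.2) : V × Module.Dual ℝ V) (w.1, -w.2)
          = -(diracPairing w w) := by
        simp [diracPairing]
      rw [this]
      linarith [h w hw])
  rwa [LinearEquiv.finrank_map_eq] at this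


lemma dp_expand (a b : V × Module.Dual ℝ V) (t : ℝ) :
    diracPairing (a + t • b) (a + t • b)
      = diracPairing a a + 2 * t * diracPairing a b + t * t * diracPairing b b := by
  simp [diracPairing, Prod.fst_add, Prod.snd_add, Prod.smul_fst, Prod.smul_snd,
    map_add, map_smul, smul_eq_mul]
  ring

lemma dp_add_left (a b c : V × Module.Dual ℝ V) :
    diracPairing (a + b) c = diracPairing a c + diracPairing b c := by
  simp [diracPairing, Prod.fst_add, Prod.snd_add, map_add]
  ring

lemma dp_smul_left (t : ℝ) (a c : V × Module.Dual ℝ V) :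
    diracPairing (t • a) c = t * diracPairing a c := by
  simp [diracPairing, Prod.smul_fst, Prod.smul_snd, map_smul, smul_eq_mul]
  ring

lemma perp_le_of_dirac {L : Submodule ℝ (V × Module.Dual ℝ V)} (hL : IsDirac L) :
    perp L ≤ L := by
  have hLle : L ≤ perp L := le_perp_of_isotropic hL.1
  -- isotropic vectors of perp L lie in L
  have hmax : ∀ v ∈ perp L, diracPairing v v = 0 → v ∈ L := by
    intro v hv hvv
    have hiso : IsIsotropic (L ⊔ ℝ ∙ v) := by
      intro p hp q hq
      obtain ⟨a, ha, s, hs, rfl⟩ := Submodule.mem_sup.mp hp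
      obtain ⟨b, hb, t, ht, rfl⟩ := Submodule.mem_sup.mp hq
      obtain ⟨c, rfl⟩ := Submodule.mem_span_singleton.mp hs
      obtain ⟨d, rfl⟩ := Submodule.mem_span_singleton.mp ht
      have e : diracPairing (a + c • v) (b + d • v)
          = diracPairing a b + d * diracPairing a v + c * diracPairing v b
            + c * (d * diracPairing v v) := by
        simp [diracPairing, Prod.fst_add, Prod.snd_add, Prod.smul_fst, Prod.smul_snd,
          map_add, map_smul, smul_eq_mul]
        ring
      have h1 : diracPairing a b = 0 := hL.1 a ha b hb
      have h2 : diracPairing a v = 0 := mem_perp.mp hv a ha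
      have h3 : diracPairing v b = 0 := by rw [dp_symm]; exact mem_perp.mp hv b hb
      rw [e, h1, h2, h3, hvv]; ring
    have heq := hL.2 _ hiso le_sup_left
    rw [← heq]
    exact Submodule.mem_sup_right (Submodule.mem_span_singleton_self v)
  -- the pairing is semidefinite on perp L
  have hsign : (∀ v ∈ perp L, 0 ≤ diracPairing v v) ∨ (∀ v ∈ perp L, diracPairing v v ≤ 0) := by
    by_contra hcon
    push_neg at hcon
    obtain ⟨⟨u, hu, hu0⟩, ⟨w, hw, hw0⟩⟩ := hcon
    -- hu0 : diracPairing u u < 0, hw0 : 0 < diracPairing w w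
    obtain ⟨t, ht⟩ : ∃ t, diracPairing w w * (t * t) + (2 * diracPairing u w) * t
        + diracPairing u u = 0 := by
      apply exists_quadratic_eq_zero (ne_of_gt hw0)
      refine ⟨Real.sqrt (discrim (diracPairing w w) (2 * diracPairing u w) (diracPairing u u)),
        ?_⟩
      rw [Real.mul_self_sqrt]
      rw [discrim]
      nlinarith [sq_nonneg (2 * diracPairing u w)]
    set v := u + t • w with hvdef
    have hv : v ∈ perp L := Submodule.add_mem _ hu (Submodule.smul_mem _ _ hw)
    have hvv : diracPairing v v = 0 := by
      rw [hvdef, dp_expand]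
      nlinarith [ht]
    have hvL := hmax v hv hvv
    have h1 : diracPairing v u = 0 := mem_perp.mp hu v hvL
    have h2 : diracPairing v w = 0 := mem_perp.mp hw v hvL
    rw [hvdef, dp_add_left, dp_smul_left] at h1 h2
    -- h1 : dp u u + t * dp w u = 0, h2 : dp u w + t * dp w w = 0
    have hswu : diracPairing w u = diracPairing u w := dp_symm _ _
    rw [hswu] at h1
    nlinarith [mul_self_nonneg t, hu0, hw0, h1, h2]
  -- dimension count
  have hP : finrank ℝ (perp L) ≤ finrank ℝ V := by
    rcases hsign with hs | hs
    · exact finrank_le_of_nonneg _ hs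
    · exact finrank_le_of_nonpos _ hs
  have hrank := finrank_le_perp_add (L := L)
  have hprod : finrank ℝ (V × Module.Dual ℝ V) = finrank ℝ V + finrank ℝ V := by
    rw [Module.finrank_prod, Subspace.dual_finrank_eq]
  have hLge : finrank ℝ V ≤ finrank ℝ L := by omega
  have heq : L = perp L := Submodule.eq_of_le_of_finrank_le hLle (le_trans hP hLge)
  exact heq.ge


lemma surj_of_dual {A B : Type*} [AddCommGroup A] [Module ℝ A] [AddCommGroup B] [Module ℝ B]
    (G : A →ₗ[ℝ] B) (b : B)
    (h : ∀ f : Module.Dual ℝ B, (∀ a, f (G a) = 0) → f b = 0) : ∃ a, G a = b := by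
  by_contra hc
  push_neg at hc
  have hb : b ∉ LinearMap.range G := by rintro ⟨a, rfl⟩; exact hc a rfl
  have hq : (Submodule.Quotient.mk b : B ⧸ LinearMap.range G) ≠ 0 := by
    simpa [Submodule.Quotient.mk_eq_zero] using hb
  obtain ⟨g, hg⟩ : ∃ g : Module.Dual ℝ (B ⧸ LinearMap.range G),
      g (Submodule.Quotient.mk b) ≠ 0 := by
    by_contra hgc
    push_neg at hgc
    exact hq ((Module.forall_dual_apply_eq_zero_iff ℝ _).mp hgc)
  apply hg
  have := h (g ∘ₗ (LinearMap.range G).mkQ) (fun a => by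
    have hz : (LinearMap.range G).mkQ (G a) = 0 := by
      rw [Submodule.mkQ_apply, Submodule.Quotient.mk_eq_zero]
      exact ⟨a, rfl⟩
    simp [hz])
  simpa using this


lemma fwd_isotropic (φ : V →ₗ[ℝ] W) {L : Submodule ℝ (V × Module.Dual ℝ V)}
    (h : IsIsotropic L) : IsIsotropic (Fwd φ L) := by
  rintro p hp q hq
  obtain ⟨x, hx1, hx2⟩ := hp
  obtain ⟨y, hy1, hy2⟩ := hq
  have h0 := h _ hx2 _ hy2
  simp only [diracPairing, LinearMap.dualMap_apply] at h0 ⊢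
  rw [hx1, hy1]
  simpa using h0

lemma perp_fwd_le (φ : V →ₗ[ℝ] W) {L : Submodule ℝ (V × Module.Dual ℝ V)}
    (hperp : perp L ≤ L) : perp (Fwd φ L) ≤ Fwd φ L := by
  rintro ⟨w, η⟩ hq
  have hq' := mem_perp.mp hq
  set E : V →ₗ[ℝ] Module.Dual ℝ ↥L :=
    ((LinearMap.snd ℝ V (Module.Dual ℝ V)).comp L.subtype).flip with hE
  set G : V →ₗ[ℝ] W × Module.Dual ℝ ↥L := LinearMap.prod φ E with hG
  set c : Module.Dual ℝ ↥L :=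
    -(η.comp (φ.comp ((LinearMap.fst ℝ V (Module.Dual ℝ V)).comp L.subtype))) with hc
  have hcons : ∀ f : Module.Dual ℝ (W × Module.Dual ℝ ↥L),
      (∀ a, f (G a) = 0) → f (w, c) = 0 := by
    intro f hf
    set f₁ : Module.Dual ℝ W := f.comp (LinearMap.inl ℝ W (Module.Dual ℝ ↥L)) with hf₁
    set f₂ : Module.Dual ℝ (Module.Dual ℝ ↥L) :=
      f.comp (LinearMap.inr ℝ W (Module.Dual ℝ ↥L)) with hf₂
    haveI : Module.Free ℝ ↥L := Module.Free.of_divisionRing ℝ ↥L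
    haveI : Module.IsReflexive ℝ ↥L := Module.IsReflexive.of_finite_of_free ℝ ↥L
    obtain ⟨ℓ, hℓ⟩ := (Module.evalEquiv ℝ ↥L).surjective f₂
    have hf2app : ∀ d : Module.Dual ℝ ↥L, f₂ d = d ℓ := by
      intro d
      rw [← hℓ]
      rfl
    have hsplit : ∀ (x : W) (d : Module.Dual ℝ ↥L), f (x, d) = f₁ x + f₂ d := by
      intro x d
      have hxd : ((x, d) : W × Module.Dual ℝ ↥L) = (x, 0) + (0, d) := by simp
      rw [hxd, map_add]
      rfl
    have hkey : ∀ z : V, f₁ (φ z) + (ℓ : V × Module.Dual ℝ V).2 z = 0 := by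
      intro z
      have hz := hf z
      have hGz : G z = (φ z, E z) := rfl
      rw [hGz, hsplit, hf2app] at hz
      exact hz
    have hℓ2 : (ℓ : V × Module.Dual ℝ V).2 = φ.dualMap (-f₁) := by
      ext z
      have hk := hkey z
      simp only [LinearMap.dualMap_apply, LinearMap.neg_apply]
      linarith
    have hmemL : (((ℓ : V × Module.Dual ℝ V).1, φ.dualMap (-f₁)) : V × Module.Dual ℝ V) ∈ L := by
      rw [← hℓ2]
      simpa using ℓ.2
    have hFwd : ((φ (ℓ : V × Module.Dual ℝ V).1, -f₁) : W × Module.Dual ℝ W) ∈ Fwd φ L :=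
      ⟨(ℓ : V × Module.Dual ℝ V).1, rfl, hmemL⟩
    have h0 := hq' _ hFwd
    simp only [diracPairing, LinearMap.neg_apply] at h0
    rw [hsplit, hf2app]
    have hcl : c ℓ = -(η (φ (ℓ : V × Module.Dual ℝ V).1)) := rfl
    rw [hcl]
    linarith
  obtain ⟨y, hy⟩ := surj_of_dual G (w, c) hcons
  have hy1 : φ y = w := congrArg Prod.fst hy
  have hy2 : E y = c := congrArg Prod.snd hy
  refine ⟨y, hy1.symm, hperp (mem_perp.mpr ?_)⟩
  intro p hp
  have happ := LinearMap.congr_fun hy2 ⟨p, hp⟩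
  have hEa : E y ⟨p, hp⟩ = p.2 y := rfl
  have hca : c ⟨p, hp⟩ = -(η (φ p.1)) := rfl
  rw [hEa, hca] at happ
  simp only [diracPairing, LinearMap.dualMap_apply]
  rw [happ]
  ring


lemma bwd_isotropic (φ : V →ₗ[ℝ] W) {L : Submodule ℝ (W × Module.Dual ℝ W)}
    (h : IsIsotropic L) : IsIsotropic (Bwd φ L) := by
  rintro p hp q hq
  obtain ⟨μ, hp2, hpL⟩ := hp
  obtain ⟨ν, hq2, hqL⟩ := hq
  have h0 := h _ hpL _ hqL
  simp only [diracPairing] at h0 ⊢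
  rw [hp2, hq2]
  simp only [LinearMap.dualMap_apply]
  simpa using h0

lemma perp_bwd_le (φ : V →ₗ[ℝ] W) {L : Submodule ℝ (W × Module.Dual ℝ W)}
    (hperp : perp L ≤ L) : perp (Bwd φ L) ≤ Bwd φ L := by
  rintro ⟨x, ζ⟩ hq
  have hq' := mem_perp.mp hq
  set E' : Module.Dual ℝ W →ₗ[ℝ] Module.Dual ℝ ↥L :=
    ((Module.Dual.eval ℝ W).comp
      ((LinearMap.fst ℝ W (Module.Dual ℝ W)).comp L.subtype)).flip with hE'
  set G : Module.Dual ℝ W →ₗ[ℝ] Module.Dual ℝ V × Module.Dual ℝ ↥L :=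
    LinearMap.prod φ.dualMap E' with hG
  set c : Module.Dual ℝ ↥L :=
    -((Module.Dual.eval ℝ W (φ x)).comp
        ((LinearMap.snd ℝ W (Module.Dual ℝ W)).comp L.subtype)) with hc
  have hcons : ∀ f : Module.Dual ℝ (Module.Dual ℝ V × Module.Dual ℝ ↥L),
      (∀ a, f (G a) = 0) → f (ζ, c) = 0 := by
    intro f hf
    set f₁ := f.comp (LinearMap.inl ℝ (Module.Dual ℝ V) (Module.Dual ℝ ↥L)) with hf₁
    set f₂ := f.comp (LinearMap.inr ℝ (Module.Dual ℝ V) (Module.Dual ℝ ↥L)) with hf₂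
    haveI : Module.Free ℝ ↥L := Module.Free.of_divisionRing ℝ ↥L
    haveI : Module.IsReflexive ℝ ↥L := Module.IsReflexive.of_finite_of_free ℝ ↥L
    obtain ⟨ℓ, hℓ⟩ := (Module.evalEquiv ℝ ↥L).surjective f₂
    obtain ⟨v, hv⟩ := (Module.evalEquiv ℝ V).surjective f₁
    have hf2app : ∀ d : Module.Dual ℝ ↥L, f₂ d = d ℓ := fun d => by rw [← hℓ]; rfl
    have hf1app : ∀ d : Module.Dual ℝ V, f₁ d = d v := fun d => by rw [← hv]; rfl
    have hsplit : ∀ (a : Module.Dual ℝ V) (d : Module.Dual ℝ ↥L),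
        f (a, d) = f₁ a + f₂ d := by
      intro a d
      have hxd : ((a, d) : Module.Dual ℝ V × Module.Dual ℝ ↥L) = (a, 0) + (0, d) := by simp
      rw [hxd, map_add]
      rfl
    have hkey : ∀ ηz : Module.Dual ℝ W, ηz (φ v + (ℓ : W × Module.Dual ℝ W).1) = 0 := by
      intro ηz
      have hz := hf ηz
      have hGz : G ηz = (φ.dualMap ηz, E' ηz) := rfl
      rw [hGz, hsplit, hf1app, hf2app] at hz
      have hE'a : (E' ηz) ℓ = ηz (ℓ : W × Module.Dual ℝ W).1 := rfl
      rw [hE'a, LinearMap.dualMap_apply] at hz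
      rw [map_add]
      exact hz
    have hb : φ v + (ℓ : W × Module.Dual ℝ W).1 = 0 :=
      (Module.forall_dual_apply_eq_zero_iff ℝ _).mp hkey
    have hb' : (ℓ : W × Module.Dual ℝ W).1 = φ (-v) := by
      rw [map_neg]
      exact eq_neg_of_add_eq_zero_right hb
    have hBwd : ((-v, φ.dualMap (ℓ : W × Module.Dual ℝ W).2) : V × Module.Dual ℝ V)
        ∈ Bwd φ L := by
      refine ⟨(ℓ : W × Module.Dual ℝ W).2, rfl, ?_⟩
      rw [← hb']
      simpa using ℓ.2
    have h0 := hq' _ hBwd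
    simp only [diracPairing, LinearMap.dualMap_apply, map_neg] at h0
    rw [hsplit, hf1app, hf2app]
    have hcl : c ℓ = -((ℓ : W × Module.Dual ℝ W).2 (φ x)) := rfl
    rw [hcl]
    linarith
  obtain ⟨η₀, hy⟩ := surj_of_dual G (ζ, c) hcons
  have hy1 : φ.dualMap η₀ = ζ := congrArg Prod.fst hy
  have hy2 : E' η₀ = c := congrArg Prod.snd hy
  refine ⟨η₀, hy1.symm, hperp (mem_perp.mpr ?_)⟩
  intro p hp
  have happ := LinearMap.congr_fun hy2 ⟨p, hp⟩
  have hEa : E' η₀ ⟨p, hp⟩ = η₀ p.1 := rfl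
  have hca : c ⟨p, hp⟩ = -(p.2 (φ x)) := rfl
  rw [hEa, hca] at happ
  simp only [diracPairing]
  rw [happ]
  ring

end DiracAux

/-- Forward and backward images of Dirac structures along a linear map are
Dirac structures. -/
theorem stmt_5 (φ : V →ₗ[ℝ] W) :
    (∀ LV : Submodule ℝ (V × Module.Dual ℝ V), IsDirac LV → IsDirac (Fwd φ LV)) ∧
    (∀ LW : Submodule ℝ (W × Module.Dual ℝ W), IsDirac LW → IsDirac (Bwd φ LW)) := by
  constructor
  · intro LV h
    exact DiracAux.isDirac_of_lagrangian (DiracAux.fwd_isotropic φ h.1)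
      (DiracAux.perp_fwd_le φ (DiracAux.perp_le_of_dirac h))
  · intro LW h
    exact DiracAux.isDirac_of_lagrangian (DiracAux.bwd_isotropic φ h.1)
      (DiracAux.perp_bwd_le φ (DiracAux.perp_le_of_dirac h))
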